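/- Let Q be an n×n real symmetric positive definite matrix and let C be an m×n real matrix with rank C = m. Then CQ⁻¹Cᵀ is invertible, and the image of the ellipsoid {x ∈ ℝⁿ | xᵀQx ≤ 1} under the linear map x ↦ Cx equals {y ∈ ℝᵐ | yᵀ(CQ⁻¹Cᵀ)⁻¹y ≤ 1}. -/

import Mathlib

open Matrix

lemma rows_li_of_rank {m n : ℕ} (C : Matrix (Fin m) (Fin n) ℝ) (hrankC : C.rank = m) :
    LinearIndependent ℝ (fun i => C i) := by
  rw [linearIndependent_iff_card_eq_finrank_span]
  rw [C.rank_eq_finrank_span_row] at hrankC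
  simp only [Set.finrank, Fintype.card_fin]
  exact hrankC.symm

lemma dp_move {m n : ℕ} (C : Matrix (Fin m) (Fin n) ℝ) (q : Fin m → ℝ) (p : Fin n → ℝ) :
    (Cᵀ *ᵥ q) ⬝ᵥ p = q ⬝ᵥ (C *ᵥ p) := by
  rw [Matrix.dotProduct_mulVec, ← Matrix.mulVec_transpose]

lemma dp_moveQ {n : ℕ} {Q : Matrix (Fin n) (Fin n) ℝ} (hQsym : Qᵀ = Q) (r p : Fin n → ℝ) :
    (Q *ᵥ r) ⬝ᵥ p = r ⬝ᵥ (Q *ᵥ p) := by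
  rw [Matrix.dotProduct_mulVec, ← Matrix.mulVec_transpose, hQsym]

/-- The image of the ellipsoid {x | xᵀQx ≤ 1} (Q symmetric positive definite) under a
full-row-rank map y = Cx is the ellipsoid {y | yᵀ(CQ⁻¹Cᵀ)⁻¹y ≤ 1}. -/
theorem image_ellipsoid (n m : ℕ)
    (Q : Matrix (Fin n) (Fin n) ℝ) (hQ : Q.PosDef)
    (C : Matrix (Fin m) (Fin n) ℝ) (hrankC : C.rank = m) :
    IsUnit (C * Q⁻¹ * Cᵀ) ∧
    C.mulVec '' {x : Fin n → ℝ | x ⬝ᵥ Q.mulVec x ≤ 1} =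
      {y : Fin m → ℝ | y ⬝ᵥ ((C * Q⁻¹ * Cᵀ)⁻¹).mulVec y ≤ 1} := by
  have hQinv : (Q⁻¹).PosDef := hQ.inv
  have hQinvsym : Q⁻¹ᵀ = Q⁻¹ := by
    simpa [Matrix.conjTranspose_eq_transpose_of_trivial] using hQinv.isHermitian.eq
  have hQsym : Qᵀ = Q := by
    simpa [Matrix.conjTranspose_eq_transpose_of_trivial] using hQ.isHermitian.eq
  -- Cᵀ *ᵥ · is injective
  have hinj : Function.Injective (fun v : Fin m → ℝ => Cᵀ *ᵥ v) := by
    have h := Matrix.vecMul_injective_iff.mpr (rows_li_of_rank C hrankC)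
    intro a b hab
    apply h
    show a ᵥ* C = b ᵥ* C
    rw [← Matrix.mulVec_transpose, ← Matrix.mulVec_transpose]
    exact hab
  -- quadratic-form identity for C * Q⁻¹ * Cᵀ
  have hquad : ∀ x : Fin m → ℝ,
      x ⬝ᵥ ((C * Q⁻¹ * Cᵀ) *ᵥ x) = (Cᵀ *ᵥ x) ⬝ᵥ (Q⁻¹ *ᵥ (Cᵀ *ᵥ x)) := by
    intro x
    rw [← Matrix.mulVec_mulVec, ← Matrix.mulVec_mulVec, Matrix.dotProduct_mulVec,
      ← Matrix.mulVec_transpose]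
  have hMpd : (C * Q⁻¹ * Cᵀ).PosDef := by
    refine Matrix.posDef_iff_dotProduct_mulVec.mpr ⟨?_, ?_⟩
    · show (C * Q⁻¹ * Cᵀ)ᴴ = C * Q⁻¹ * Cᵀ
      rw [Matrix.conjTranspose_eq_transpose_of_trivial]
      rw [Matrix.transpose_mul, Matrix.transpose_mul, Matrix.transpose_transpose,
        hQinvsym, Matrix.mul_assoc]
    · intro x hx
      have hCx : Cᵀ *ᵥ x ≠ 0 := by
        intro h
        apply hx
        apply hinj
        simpa using h
      have h := hQinv.dotProduct_mulVec_pos hCx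
      rw [star_trivial] at h
      show (0:ℝ) < star x ⬝ᵥ ((C * Q⁻¹ * Cᵀ) *ᵥ x)
      rw [star_trivial, hquad]
      exact h
  have hMunit : IsUnit (C * Q⁻¹ * Cᵀ) := hMpd.isUnit
  refine ⟨hMunit, ?_⟩
  have hMMinv : (C * Q⁻¹ * Cᵀ) * (C * Q⁻¹ * Cᵀ)⁻¹ = 1 :=
    Matrix.mul_nonsing_inv _ (isUnit_iff_isUnit_det _ |>.mp hMunit)
  have hQQinv : Q * Q⁻¹ = 1 := Matrix.mul_nonsing_inv _ (isUnit_iff_isUnit_det _ |>.mp hQ.isUnit)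
  -- notation: for a given v, the canonical preimage is x₀ v
  set Minv := (C * Q⁻¹ * Cᵀ)⁻¹ with hMinv
  have main : ∀ v : Fin m → ℝ,
      C *ᵥ (Q⁻¹ *ᵥ (Cᵀ *ᵥ (Minv *ᵥ v))) = v ∧
      Q *ᵥ (Q⁻¹ *ᵥ (Cᵀ *ᵥ (Minv *ᵥ v))) = Cᵀ *ᵥ (Minv *ᵥ v) := by
    intro v
    constructor
    · rw [Matrix.mulVec_mulVec, Matrix.mulVec_mulVec, Matrix.mulVec_mulVec,
        show C * Q⁻¹ * Cᵀ * Minv = 1 by rw [hMinv]; exact hMMinv]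
      · rw [Matrix.one_mulVec]
      -- reassociate: C * (Q⁻¹ * (Cᵀ * Minv)) vs (C * Q⁻¹ * Cᵀ) * Minv
    · have hQQ : ∀ t : Fin n → ℝ, Q *ᵥ (Q⁻¹ *ᵥ t) = t := fun t => by
        rw [Matrix.mulVec_mulVec, hQQinv, Matrix.one_mulVec]
      exact hQQ _
  ext y
  simp only [Set.mem_image, Set.mem_setOf_eq]
  constructor
  · rintro ⟨x, hx, rfl⟩
    set u : Fin m → ℝ := Minv *ᵥ (C *ᵥ x) with hu
    set x₀ : Fin n → ℝ := Q⁻¹ *ᵥ (Cᵀ *ᵥ u) with hx₀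
    obtain ⟨hCx₀, hQx₀⟩ := main (C *ᵥ x)
    rw [← hu, ← hx₀] at hCx₀ hQx₀
    set w : Fin n → ℝ := x - x₀ with hw
    have hCw : C *ᵥ w = 0 := by
      rw [hw, Matrix.mulVec_sub, hCx₀, sub_self]
    have hxsum : x = x₀ + w := by rw [hw]; ring
    -- cross terms vanish
    have hc1 : x₀ ⬝ᵥ (Q *ᵥ w) = 0 := by
      rw [← dp_moveQ hQsym, hQx₀, dp_move, hCw, dotProduct_zero]
    have hc2 : w ⬝ᵥ (Q *ᵥ x₀) = 0 := by
      rw [dotProduct_comm, dp_moveQ hQsym]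
      exact hc1
    -- the quadratic form at x₀
    have hq0 : x₀ ⬝ᵥ (Q *ᵥ x₀) = (C *ᵥ x) ⬝ᵥ (Minv *ᵥ (C *ᵥ x)) := by
      rw [hQx₀, dotProduct_comm, dp_move, hCx₀, dotProduct_comm, hu]
    have hwQw : 0 ≤ w ⬝ᵥ (Q *ᵥ w) := by
      have h := hQ.posSemidef.dotProduct_mulVec_nonneg w
      simpa using h
    have hexp : x ⬝ᵥ (Q *ᵥ x) =
        (C *ᵥ x) ⬝ᵥ (Minv *ᵥ (C *ᵥ x)) + w ⬝ᵥ (Q *ᵥ w) := by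
      conv_lhs => rw [hxsum]
      rw [Matrix.mulVec_add, add_dotProduct, dotProduct_add,
        dotProduct_add, hq0, hc1, hc2]
      ring
    have : (C *ᵥ x) ⬝ᵥ (Minv *ᵥ (C *ᵥ x)) ≤ x ⬝ᵥ (Q *ᵥ x) := by
      rw [hexp]; linarith
    exact this.trans hx
  · intro hy
    obtain ⟨hCx₀, hQx₀⟩ := main y
    refine ⟨Q⁻¹ *ᵥ (Cᵀ *ᵥ (Minv *ᵥ y)), ?_, hCx₀⟩
    show (Q⁻¹ *ᵥ (Cᵀ *ᵥ (Minv *ᵥ y))) ⬝ᵥ (Q *ᵥ (Q⁻¹ *ᵥ (Cᵀ *ᵥ (Minv *ᵥ y)))) ≤ 1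
    rw [hQx₀, dotProduct_comm, dp_move, hCx₀, dotProduct_comm]
    exact hy
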